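/- For splitjunction-free LTL formulas under synchronous team semantics, satisfaction by a Kripke structure's trace team reduces to a single-trace check: defining S₀ = {w_I}, S_{i+1} = successors of S_i, and the trace t over AP ∪ {p̄ | p ∈ AP} by t(i) = {p | p ∈ η(w) for all w ∈ S_i} ∪ {p̄ | p ∉ η(w) for all w ∈ S_i}, we have T(K) ⊨ˢ φ if and only if t ⊨ φ̄ under classical LTL semantics, where φ̄ replaces each negated atom ¬p in φ by the fresh atom p̄. -/

import Mathlib

/-- A trace assigns to each time point a set of atomic propositions. -/
abbrev Trace (AP : Type) := ℕ → Set AP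
/-- A team is a set of traces. -/
abbrev Team (AP : Type) := Set (Trace AP)

/-- The suffix `t[i,∞)` of a trace. -/
def Trace.shift {AP : Type} (t : Trace AP) (i : ℕ) : Trace AP := fun j => t (i + j)

/-- The synchronous suffix `T[i,∞)` of a team. -/
def Team.shift {AP : Type} (T : Team AP) (i : ℕ) : Team AP := (fun t => t.shift i) '' T

/-- Asynchronous shift: each trace `t` is shifted by its own amount `f t`. -/
def Team.ashift {AP : Type} (T : Team AP) (f : Trace AP → ℕ) : Team AP :=
  (fun t => t.shift (f t)) '' T

/-- LTL formulas in negation normal form. -/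
inductive LTL (AP : Type) : Type where
  | atom : AP → LTL AP
  | natom : AP → LTL AP
  | conj : LTL AP → LTL AP → LTL AP
  | disj : LTL AP → LTL AP → LTL AP
  | next : LTL AP → LTL AP
  | fut : LTL AP → LTL AP
  | glob : LTL AP → LTL AP
  | untl : LTL AP → LTL AP → LTL AP
  | rel : LTL AP → LTL AP → LTL AP

/-- Classical LTL semantics on a single trace. -/
def ltlSat {AP : Type} : LTL AP → Trace AP → Prop
  | .atom p, t => p ∈ t 0
  | .natom p, t => p ∉ t 0
  | .conj φ ψ, t => ltlSat φ t ∧ ltlSat ψ t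
  | .disj φ ψ, t => ltlSat φ t ∨ ltlSat ψ t
  | .next φ, t => ltlSat φ (t.shift 1)
  | .fut φ, t => ∃ k, ltlSat φ (t.shift k)
  | .glob φ, t => ∀ k, ltlSat φ (t.shift k)
  | .untl φ ψ, t => ∃ k, ltlSat ψ (t.shift k) ∧ ∀ k' < k, ltlSat φ (t.shift k')
  | .rel φ ψ, t => ∀ k, ltlSat ψ (t.shift k) ∨ ∃ k' < k, ltlSat φ (t.shift k')

/-- Synchronous team semantics for LTL. -/
def syncSat {AP : Type} : LTL AP → Team AP → Prop
  | .atom p, T => ∀ t ∈ T, p ∈ t 0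
  | .natom p, T => ∀ t ∈ T, p ∉ t 0
  | .conj φ ψ, T => syncSat φ T ∧ syncSat ψ T
  | .disj φ ψ, T => ∃ T₁ T₂, T₁ ∪ T₂ = T ∧ syncSat φ T₁ ∧ syncSat ψ T₂
  | .next φ, T => syncSat φ (T.shift 1)
  | .fut φ, T => ∃ k, syncSat φ (T.shift k)
  | .glob φ, T => ∀ k, syncSat φ (T.shift k)
  | .untl φ ψ, T => ∃ k, syncSat ψ (T.shift k) ∧ ∀ k' < k, syncSat φ (T.shift k')
  | .rel φ ψ, T => ∀ k, syncSat ψ (T.shift k) ∨ ∃ k' < k, syncSat φ (T.shift k')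

/-- Asynchronous team semantics for LTL: temporal operators use an
independent time shift `f t` for each trace `t` of the team. -/
def asyncSat {AP : Type} : LTL AP → Team AP → Prop
  | .atom p, T => ∀ t ∈ T, p ∈ t 0
  | .natom p, T => ∀ t ∈ T, p ∉ t 0
  | .conj φ ψ, T => asyncSat φ T ∧ asyncSat ψ T
  | .disj φ ψ, T => ∃ T₁ T₂, T₁ ∪ T₂ = T ∧ asyncSat φ T₁ ∧ asyncSat ψ T₂
  | .next φ, T => asyncSat φ (T.shift 1)
  | .fut φ, T => ∃ f : Trace AP → ℕ, asyncSat φ (T.ashift f)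
  | .glob φ, T => ∀ f : Trace AP → ℕ, asyncSat φ (T.ashift f)
  | .untl φ ψ, T => ∃ f : Trace AP → ℕ, asyncSat ψ (T.ashift f) ∧
      ∀ g : Trace AP → ℕ, (∀ t ∈ T, g t < f t) → asyncSat φ (T.ashift g)
  | .rel φ ψ, T => ∀ f : Trace AP → ℕ, asyncSat ψ (T.ashift f) ∨
      ∃ g : Trace AP → ℕ, (∀ t ∈ T, g t < f t) ∧ asyncSat φ (T.ashift g)

/-- A Kripke structure over worlds `W` and atomic propositions `AP`. -/
structure Kripke (AP W : Type) where
  R : W → W → Prop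
  leftTotal : ∀ w, ∃ w', R w w'
  label : W → Set AP
  init : W

/-- A path of a Kripke structure. -/
def Kripke.isPath {AP W : Type} (K : Kripke AP W) (π : ℕ → W) : Prop :=
  π 0 = K.init ∧ ∀ i, K.R (π i) (π (i + 1))

/-- The team of traces of a Kripke structure. -/
def Kripke.traces {AP W : Type} (K : Kripke AP W) : Team AP :=
  { t | ∃ π : ℕ → W, K.isPath π ∧ t = fun i => K.label (π i) }

/-- `S_i`: the set of worlds reachable from the initial world in `i` steps. -/
def Kripke.reach {AP W : Type} (K : Kripke AP W) : ℕ → Set W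
  | 0 => {K.init}
  | i + 1 => { w' | ∃ w ∈ K.reach i, K.R w w' }

/-- The collapsed trace `t` over `AP ∪ {p̄ | p ∈ AP}` (fresh atoms are the
right summand): `t(i)` contains `p` iff `p` holds in all worlds of `S_i`, and
`p̄` iff `p` fails in all worlds of `S_i`. -/
def Kripke.collapseTrace {AP W : Type} (K : Kripke AP W) : Trace (AP ⊕ AP) :=
  fun i => (Sum.inl '' { p | ∀ w ∈ K.reach i, p ∈ K.label w }) ∪
           (Sum.inr '' { p | ∀ w ∈ K.reach i, p ∉ K.label w })

/-- Splitjunction-free LTL formulas. -/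
def splitFree {AP : Type} : LTL AP → Prop
  | .atom _ => True
  | .natom _ => True
  | .conj φ ψ => splitFree φ ∧ splitFree ψ
  | .disj _ _ => False
  | .next φ => splitFree φ
  | .fut φ => splitFree φ
  | .glob φ => splitFree φ
  | .untl φ ψ => splitFree φ ∧ splitFree ψ
  | .rel φ ψ => splitFree φ ∧ splitFree ψ

/-- `φ̄`: replace every negated atom `¬p` by the fresh atom `p̄`. -/
def barFormula {AP : Type} : LTL AP → LTL (AP ⊕ AP)
  | .atom p => .atom (Sum.inl p)
  | .natom p => .atom (Sum.inr p)
  | .conj φ ψ => .conj (barFormula φ) (barFormula ψ)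
  | .disj φ ψ => .disj (barFormula φ) (barFormula ψ)
  | .next φ => .next (barFormula φ)
  | .fut φ => .fut (barFormula φ)
  | .glob φ => .glob (barFormula φ)
  | .untl φ ψ => .untl (barFormula φ) (barFormula ψ)
  | .rel φ ψ => .rel (barFormula φ) (barFormula ψ)

/-- The collapse of an arbitrary team. -/
def collapse {AP : Type} (T : Team AP) : Trace (AP ⊕ AP) :=
  fun i => (Sum.inl '' { p | ∀ t ∈ T, p ∈ t i }) ∪
           (Sum.inr '' { p | ∀ t ∈ T, p ∉ t i })

lemma collapse_shift {AP : Type} (T : Team AP) (k : ℕ) :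
    collapse (T.shift k) = (collapse T).shift k := by
  funext i
  have h1 : { p : AP | ∀ t ∈ T.shift k, p ∈ t i } = { p | ∀ t ∈ T, p ∈ t (k + i) } := by
    ext p; simp [Team.shift, Trace.shift]
  have h2 : { p : AP | ∀ t ∈ T.shift k, p ∉ t i } = { p | ∀ t ∈ T, p ∉ t (k + i) } := by
    ext p; simp [Team.shift, Trace.shift]
  simp only [collapse, Trace.shift, h1, h2]

lemma sync_collapse {AP : Type} (φ : LTL AP) (hφ : splitFree φ) :
    ∀ T : Team AP, syncSat φ T ↔ ltlSat (barFormula φ) (collapse T) := by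
  induction φ with
  | atom p => intro T; simp [syncSat, ltlSat, barFormula, collapse]
  | natom p => intro T; simp [syncSat, ltlSat, barFormula, collapse]
  | conj φ ψ ihφ ihψ =>
      intro T
      exact and_congr (ihφ hφ.1 T) (ihψ hφ.2 T)
  | disj φ ψ _ _ => exact absurd hφ id
  | next φ ih =>
      intro T
      simpa [syncSat, ltlSat, barFormula, collapse_shift] using ih hφ (T.shift 1)
  | fut φ ih =>
      intro T
      simp only [syncSat, ltlSat, barFormula, ← collapse_shift]
      exact exists_congr fun k => ih hφ (T.shift k)
  | glob φ ih =>
      intro T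
      simp only [syncSat, ltlSat, barFormula, ← collapse_shift]
      exact forall_congr' fun k => ih hφ (T.shift k)
  | untl φ ψ ihφ ihψ =>
      intro T
      simp only [syncSat, ltlSat, barFormula, ← collapse_shift]
      exact exists_congr fun k => and_congr (ihψ hφ.2 _)
        (forall_congr' fun k' => forall_congr' fun _ => ihφ hφ.1 _)
  | rel φ ψ ihφ ihψ =>
      intro T
      simp only [syncSat, ltlSat, barFormula, ← collapse_shift]
      refine forall_congr' fun k => or_congr (ihψ hφ.2 _) ?_
      exact exists_congr fun k' => and_congr Iff.rfl (ihφ hφ.1 _)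

/-- Extend from a world by repeatedly choosing successors. -/
noncomputable def Kripke.extendPath {AP W : Type} (K : Kripke AP W) (w : W) : ℕ → W
  | 0 => w
  | n + 1 => Classical.choose (K.leftTotal (K.extendPath w n))

lemma Kripke.extendPath_step {AP W : Type} (K : Kripke AP W) (w : W) (n : ℕ) :
    K.R (K.extendPath w n) (K.extendPath w (n + 1)) :=
  Classical.choose_spec (K.leftTotal (K.extendPath w n))

lemma Kripke.path_mem_reach {AP W : Type} (K : Kripke AP W) (π : ℕ → W)
    (h : K.isPath π) : ∀ i, π i ∈ K.reach i := by
  intro i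
  induction i with
  | zero => simp [Kripke.reach, h.1]
  | succ i ih => exact ⟨π i, ih, h.2 i⟩

lemma Kripke.reach_mem_path {AP W : Type} (K : Kripke AP W) :
    ∀ i w, w ∈ K.reach i → ∃ π, K.isPath π ∧ π i = w := by
  intro i
  induction i with
  | zero =>
      rintro w rfl
      exact ⟨K.extendPath K.init, ⟨rfl, K.extendPath_step K.init⟩, rfl⟩
  | succ i ih =>
      rintro w' ⟨w, hw, hR⟩
      obtain ⟨π, hπ, hπi⟩ := ih w hw
      refine ⟨fun n => if n ≤ i then π n else K.extendPath w' (n - (i + 1)), ?_, ?_⟩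
      · constructor
        · simp [hπ.1]
        · intro n
          by_cases h1 : n + 1 ≤ i
          · have h0 : n ≤ i := by omega
            simp only [if_pos h0, if_pos h1]
            exact hπ.2 n
          · by_cases h0 : n ≤ i
            · have : n = i := by omega
              subst this
              simp only [if_pos le_rfl, if_neg h1, hπi]
              simpa [Kripke.extendPath] using hR
            · simp only [if_neg h0, if_neg h1]
              have : n + 1 - (i + 1) = (n - (i + 1)) + 1 := by omega
              rw [this]
              exact K.extendPath_step w' _
      · simp [Kripke.extendPath]

lemma collapse_traces {AP W : Type} (K : Kripke AP W) :
    collapse K.traces = K.collapseTrace := by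
  funext i
  have h1 : { p : AP | ∀ t ∈ K.traces, p ∈ t i } = { p | ∀ w ∈ K.reach i, p ∈ K.label w } := by
    ext p
    constructor
    · intro h w hw
      obtain ⟨π, hπ, rfl⟩ := K.reach_mem_path i w hw
      exact h _ ⟨π, hπ, rfl⟩
    · rintro h t ⟨π, hπ, rfl⟩
      exact h _ (K.path_mem_reach π hπ i)
  have h2 : { p : AP | ∀ t ∈ K.traces, p ∉ t i } = { p | ∀ w ∈ K.reach i, p ∉ K.label w } := by
    ext p
    constructor
    · intro h w hw
      obtain ⟨π, hπ, rfl⟩ := K.reach_mem_path i w hw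
      exact h _ ⟨π, hπ, rfl⟩
    · rintro h t ⟨π, hπ, rfl⟩
      exact h _ (K.path_mem_reach π hπ i)
  simp only [collapse, Kripke.collapseTrace, h1, h2]

/-- for splitjunction-free formulas, synchronous team model
checking of a Kripke structure reduces to a single-trace classical check. -/
theorem sync_mc_splitfree_reduces {AP W : Type} [Fintype W]
    (K : Kripke AP W) (φ : LTL AP) (hφ : splitFree φ) :
    syncSat φ K.traces ↔ ltlSat (barFormula φ) K.collapseTrace := by
  rw [← collapse_traces]
  exact sync_collapse φ hφ K.traces
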